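/- arXiv:1411.7838 — 2 statements merged into one kernel-verified Lean document; each statement's English description precedes it below -/
import Mathlib

section
/- Let G = (V, E) be a finite directed graph and let s, t ∈ V be distinct. Call a set S ⊆ E an s–t-scenario if t is an endpoint of some arc of S and every node that is an endpoint of an arc of S is reachable from s in (V, S). For an s–t-scenario S, let V(S) denote the set of endpoints of arcs of S and let S* := { (v → u) ∈ E : v ∈ V(S) } be the set of arcs of E whose tail lies in V(S). Then the number of arc subsets F ⊆ E with t ∈ reach_F({s}) equals the sum, over all s–t-scenarios S, of 2^{|E ∖ S*|}. In symbols: |{ F ⊆ E : t ∈ reach_F({s}) }| = ∑_{S an s–t-scenario} 2^{|E ∖ S*|}. -/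
/-- The set of nodes reachable from some node of `X` by a directed path
using only arcs of `S`. -/
def reach {V : Type*} (S : Set (V × V)) (X : Set V) : Set V :=
  {v | ∃ x ∈ X, Relation.ReflTransGen (fun a b : V => (a, b) ∈ S) x v}

/-- `S` is an s–t-scenario: `S ⊆ E`, `t` is an endpoint of some arc of `S`, and
every endpoint of an arc of `S` is reachable from `s` using only arcs of `S`. -/
def IsScenario {V : Type*} (E : Finset (V × V)) (s t : V) (S : Finset (V × V)) : Prop :=
  S ⊆ E ∧ (∃ e ∈ S, e.1 = t ∨ e.2 = t) ∧
    ∀ v : V, (∃ e ∈ S, e.1 = v ∨ e.2 = v) → v ∈ reach (↑S : Set (V × V)) {s}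

section Aux
variable {V : Type*}

lemma reach_mono {S S' : Set (V × V)} (h : S ⊆ S') (X : Set V) :
    reach S X ⊆ reach S' X := by
  rintro v ⟨x, hx, hp⟩
  exact ⟨x, hx, Relation.ReflTransGen.mono (fun a b hab => h hab) _ _ hp⟩

open Classical in
/-- Restricting to arcs whose tail is reachable does not change reachability. -/
lemma reach_core (F : Finset (V × V)) (s : V) :
    reach (↑(F.filter fun e => e.1 ∈ reach (↑F : Set (V × V)) {s}) : Set (V × V)) {s}
      = reach (↑F : Set (V × V)) {s} := by
  apply Set.Subset.antisymm
  · exact reach_mono (by exact_mod_cast fun e he => Finset.mem_of_mem_filter e (by exact_mod_cast he)) _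
  · rintro v ⟨x, hx, hp⟩
    rw [Set.mem_singleton_iff] at hx; subst x
    refine ⟨s, rfl, ?_⟩
    induction hp with
    | refl => exact Relation.ReflTransGen.refl
    | tail hp' hbc ih =>
      refine ih.tail ?_
      simp only [Finset.coe_filter, Set.mem_setOf_eq]
      exact ⟨hbc, ⟨s, rfl, hp'⟩⟩

end Aux

open Classical in
/-- The number of arc subsets `F ⊆ E` with `t ∈ reach_F({s})` equals
the sum over all s–t-scenarios `S` of `2^{|E ∖ S*|}`, where `S*` is the set of
arcs of `E` whose tail is an endpoint of an arc of `S`. -/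
theorem st_connecting_subsets_eq_sum_scenarios {V : Type*} [Fintype V] [DecidableEq V]
    (E : Finset (V × V)) (s t : V) (hst : s ≠ t) :
    (E.powerset.filter
      (fun F : Finset (V × V) => t ∈ reach (↑F : Set (V × V)) {s})).card =
    ∑ S ∈ E.powerset.filter (IsScenario E s t),
      2 ^ (E \ E.filter (fun e => ∃ f ∈ S, f.1 = e.1 ∨ f.2 = e.1)).card := by
  classical
  set Sc : Finset (V × V) → Finset (V × V) :=
    fun F => F.filter (fun e => e.1 ∈ reach (↑F : Set (V × V)) {s}) with hScdef
  -- Sc F is a scenario for every connecting F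
  have hmaps : ∀ F ∈ E.powerset.filter
      (fun F : Finset (V × V) => t ∈ reach (↑F : Set (V × V)) {s}),
      Sc F ∈ E.powerset.filter (IsScenario E s t) := by
    intro F hF
    rw [Finset.mem_filter, Finset.mem_powerset] at hF
    obtain ⟨hFE, hconn⟩ := hF
    have hScE : Sc F ⊆ E := fun e he => hFE (Finset.mem_of_mem_filter e he)
    rw [Finset.mem_filter, Finset.mem_powerset]
    refine ⟨hScE, hScE, ?_, ?_⟩
    · -- t is an endpoint of some arc of Sc F
      obtain ⟨x, hx, hp⟩ := hconn
      rw [Set.mem_singleton_iff] at hx; subst x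
      rcases hp.cases_tail with h | ⟨c, hc, hct⟩
      · exact absurd h.symm hst
      · exact ⟨(c, t), Finset.mem_filter.2 ⟨hct, ⟨s, rfl, hc⟩⟩, Or.inr rfl⟩
    · -- endpoints of Sc F are reachable in Sc F
      rintro v ⟨e, he, hv⟩
      rw [hScdef] at he ⊢
      rw [reach_core F s]
      rw [Finset.mem_filter] at he
      rcases hv with hv | hv
      · exact hv ▸ he.2
      · obtain ⟨x, hx, hp⟩ := he.2
        exact ⟨x, hx, hp.tail (by subst hv; exact he.1)⟩
  rw [Finset.card_eq_sum_card_fiberwise hmaps]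
  refine Finset.sum_congr rfl ?_
  intro S hS
  rw [Finset.mem_filter, Finset.mem_powerset] at hS
  obtain ⟨hSE, _, ht, hreach⟩ := hS
  set Sstar : Finset (V × V) :=
    E.filter (fun e => ∃ f ∈ S, f.1 = e.1 ∨ f.2 = e.1) with hSstardef
  have hSsub : S ⊆ Sstar := fun e he =>
    Finset.mem_filter.2 ⟨hSE he, e, he, Or.inl rfl⟩
  -- s is an endpoint of some arc of S
  have hsend : ∃ f ∈ S, f.1 = s ∨ f.2 = s := by
    obtain ⟨x, hx, hp⟩ := hreach t ht
    rw [Set.mem_singleton_iff] at hx; subst x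
    rcases hp.cases_head with h | ⟨c, hc, _⟩
    · exact absurd h hst
    · exact ⟨(s, c), by exact_mod_cast hc, Or.inl rfl⟩
  have htS : t ∈ reach (↑S : Set (V × V)) {s} := hreach t ht
  rw [← Finset.card_powerset]
  refine Finset.card_bij' (fun F _ => F \ Sstar) (fun T _ => S ∪ T) ?_ ?_ ?_ ?_
  · -- maps into powerset
    intro F hF
    simp only [Finset.mem_filter, Finset.mem_powerset] at hF ⊢
    exact Finset.sdiff_subset_sdiff hF.1.1 (le_refl _)
  · -- inverse maps into fiber
    intro T hT
    rw [Finset.mem_powerset] at hT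
    have hTS : ∀ e ∈ T, e ∉ Sstar := fun e he => (Finset.mem_sdiff.1 (hT he)).2
    have hFE : S ∪ T ⊆ E := by
      intro e he
      rcases Finset.mem_union.1 he with h | h
      · exact hSE h
      · exact (Finset.mem_sdiff.1 (hT h)).1
    have hSF : (↑S : Set (V × V)) ⊆ ↑(S ∪ T) := by
      exact_mod_cast (Finset.subset_union_left : S ⊆ S ∪ T)
    -- reach in S ∪ T stays within endpoints of S
    have hbound : ∀ v ∈ reach (↑(S ∪ T) : Set (V × V)) {s},
        ∃ f ∈ S, f.1 = v ∨ f.2 = v := by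
      rintro v ⟨x, hx, hp⟩
      rw [Set.mem_singleton_iff] at hx; subst x
      induction hp with
      | refl => exact hsend
      | tail hp' hbc ih =>
        rename_i b c
        have hbc' : (b, c) ∈ S ∪ T := by exact_mod_cast hbc
        rcases Finset.mem_union.1 hbc' with h | h
        · exact ⟨(b, c), h, Or.inr rfl⟩
        · exact absurd (Finset.mem_filter.2 ⟨(Finset.mem_sdiff.1 (hT h)).1, ih⟩) (hTS _ h)
    have hScF : Sc (S ∪ T) = S := by
      ext e
      rw [hScdef]
      simp only [Finset.mem_filter]
      constructor
      · rintro ⟨heF, hr⟩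
        have : e ∈ Sstar := Finset.mem_filter.2 ⟨hFE heF, hbound _ hr⟩
        rcases Finset.mem_union.1 heF with h | h
        · exact h
        · exact absurd this (hTS _ h)
      · intro he
        refine ⟨Finset.mem_union_left _ he, ?_⟩
        exact reach_mono hSF _ (hreach e.1 ⟨e, he, Or.inl rfl⟩)
    simp only [Finset.mem_filter, Finset.mem_powerset]
    exact ⟨⟨hFE, reach_mono hSF _ htS⟩, hScF⟩
  · -- left inverse : S ∪ (F \ Sstar) = F
    intro F hF
    simp only [Finset.mem_filter, Finset.mem_powerset] at hF
    obtain ⟨⟨hFE, hconn⟩, hScF⟩ := hF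
    have hSF : S ⊆ F := by
      rw [← hScF, hScdef]; exact Finset.filter_subset _ _
    ext e
    simp only [Finset.mem_union, Finset.mem_sdiff]
    constructor
    · rintro (h | ⟨h, _⟩)
      · exact hSF h
      · exact h
    · intro he
      by_cases hstar : e ∈ Sstar
      · left
        rw [← hScF, hScdef]
        refine Finset.mem_filter.2 ⟨he, ?_⟩
        obtain ⟨_, hend⟩ := Finset.mem_filter.1 hstar
        have : e.1 ∈ reach (↑S : Set (V × V)) {s} := hreach e.1 hend
        have hSsubF : (↑S : Set (V × V)) ⊆ ↑F := by exact_mod_cast hSF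
        exact reach_mono hSsubF _ this
      · exact Or.inr ⟨he, hstar⟩
  · -- right inverse : (S ∪ T) \ Sstar = T
    intro T hT
    rw [Finset.mem_powerset] at hT
    ext e
    simp only [Finset.mem_sdiff, Finset.mem_union]
    constructor
    · rintro ⟨h | h, hstar⟩
      · exact absurd (hSsub h) hstar
      · exact h
    · intro he
      exact ⟨Or.inr he, (Finset.mem_sdiff.1 (hT he)).2⟩
end

section
/- Structural decomposition for the unlimited-budget algorithm: Let G = (V, E, w) be an influence graph, E_det := { e ∈ E : w(e) = 1 } its set of deterministic arcs, and V_p := { v ∈ V : v is the tail of some arc e with w(e) < 1 } the set of nodes with an outgoing probabilistic arc. Let X ⊆ V be deterministically closed, i.e., reach_{E_det}(X) = X. Set X_o := reach_{E_det}(X ∩ V_p) and X' := X ∖ X_o. Then p(v|X) = 1 for every v ∈ X', and p(v|X) = p(v|X_o) for every v ∈ V ∖ X'. -/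
section Aux

/-- Monotonicity of reachability in the source set. -/
lemma reach_mono' {V : Type*} (S : Set (V × V)) {X Y : Set V} (h : X ⊆ Y) :
    {v | ∃ x ∈ X, Relation.ReflTransGen (fun a b : V => (a, b) ∈ S) x v} ⊆
    {v | ∃ x ∈ Y, Relation.ReflTransGen (fun a b : V => (a, b) ∈ S) x v} := by
  rintro v ⟨x, hx, hp⟩
  exact ⟨x, h hx, hp⟩

/-- The live-arc probabilities sum to 1 over all arc subsets. -/
lemma sum_liveP' {V : Type*} [DecidableEq V] (w : V × V → ℚ) (E : Finset (V × V)) :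
    ∑ S ∈ E.powerset, ((∏ e ∈ S, w e) * ∏ e ∈ E \ S, (1 - w e)) = 1 := by
  rw [← Finset.prod_add]
  simp

end Aux


/-- The live-arc probability of the arc subset `S ⊆ E`:
`P(S) = (∏_{e ∈ S} w(e)) · (∏_{e ∈ E∖S} (1 − w(e)))`. -/
def liveP {V : Type*} [DecidableEq V] (w : V × V → ℚ) (E S : Finset (V × V)) : ℚ :=
  (∏ e ∈ S, w e) * ∏ e ∈ E \ S, (1 - w e)

open Classical in
/-- The activation probability `p(v|X)` of node `v` for effector set `X`. -/
noncomputable def actProb {V : Type*} [Fintype V] [DecidableEq V]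
    (w : V × V → ℚ) (E : Finset (V × V)) (X : Set V) (v : V) : ℚ :=
  ∑ S ∈ E.powerset.filter (fun T : Finset (V × V) => v ∈ reach (↑T : Set (V × V)) X),
    liveP w E S

/-- Structural decomposition for the unlimited-budget algorithm.
For a deterministically closed effector set `X`, with `X_o` the deterministic
closure of the effectors having an outgoing probabilistic arc and `X' = X ∖ X_o`,
every node of `X'` has activation probability 1 and every other node has the same
activation probability under `X` as under `X_o`. -/
theorem unlimited_budget_decomposition {V : Type*} [Fintype V] [DecidableEq V]
    (E : Finset (V × V)) (w : V × V → ℚ)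
    (hw : ∀ e ∈ E, 0 < w e ∧ w e ≤ 1)
    (X : Set V)
    (hclosed : reach (↑(E.filter (fun e => w e = 1)) : Set (V × V)) X = X) :
    (∀ v ∈ X \ reach (↑(E.filter (fun e => w e = 1)) : Set (V × V))
        (X ∩ {v : V | ∃ u : V, (v, u) ∈ E ∧ w (v, u) < 1}),
      actProb w E X v = 1) ∧
    (∀ v : V, v ∉ X \ reach (↑(E.filter (fun e => w e = 1)) : Set (V × V))
        (X ∩ {v : V | ∃ u : V, (v, u) ∈ E ∧ w (v, u) < 1}) →
      actProb w E X v =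
        actProb w E (reach (↑(E.filter (fun e => w e = 1)) : Set (V × V))
          (X ∩ {v : V | ∃ u : V, (v, u) ∈ E ∧ w (v, u) < 1})) v) := by
  classical
  set Edet : Finset (V × V) := E.filter (fun e => w e = 1) with hEdet
  set Vp : Set V := {v : V | ∃ u : V, (v, u) ∈ E ∧ w (v, u) < 1} with hVp
  set Xo : Set V := reach (↑Edet : Set (V × V)) (X ∩ Vp) with hXo
  -- Xo ⊆ X
  have hXoX : Xo ⊆ X := by
    have h1 : Xo ⊆ reach (↑Edet : Set (V × V)) X := fun v ⟨x, hx, hp⟩ => ⟨x, hx.1, hp⟩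
    rw [hclosed] at h1
    exact h1
  -- key reachability lemma
  have key : ∀ (T : Finset (V × V)), T ⊆ E → ∀ x ∈ X, ∀ v : V,
      Relation.ReflTransGen (fun a b : V => (a, b) ∈ (↑T : Set (V × V))) x v →
      v ∈ X ∨ v ∈ reach (↑T : Set (V × V)) Xo := by
    intro T hT x hx v hp
    induction hp with
    | refl => exact Or.inl hx
    | tail hpath hrc ih =>
      rename_i b c
      rcases ih with hb | hb
      · have hbcE : (b, c) ∈ E := hT hrc
        by_cases hw1 : w (b, c) = 1
        · left
          rw [← hclosed]
          refine ⟨b, hb, Relation.ReflTransGen.single ?_⟩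
          exact Finset.mem_coe.mpr (Finset.mem_filter.mpr ⟨hbcE, hw1⟩)
        · right
          have hlt : w (b, c) < 1 := lt_of_le_of_ne ((hw _ hbcE).2) hw1
          refine ⟨b, ⟨b, ⟨hb, ⟨c, hbcE, hlt⟩⟩, Relation.ReflTransGen.refl⟩,
            Relation.ReflTransGen.single hrc⟩
      · right
        obtain ⟨y, hy, hpath'⟩ := hb
        exact ⟨y, hy, hpath'.tail hrc⟩
  constructor
  · -- part 1 : v ∈ X' has activation probability 1
    intro v hv
    unfold actProb
    rw [Finset.filter_true_of_mem (fun S _ => ⟨v, hv.1, Relation.ReflTransGen.refl⟩)]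
    exact sum_liveP' w E
  · -- part 2
    intro v hv
    have hvimp : v ∈ X → v ∈ Xo := by
      intro hvX
      by_contra hvo
      exact hv ⟨hvX, hvo⟩
    unfold actProb
    apply Finset.sum_congr _ (fun _ _ => rfl)
    apply Finset.filter_congr
    intro T hT
    rw [Finset.mem_powerset] at hT
    constructor
    · rintro ⟨x, hx, hp⟩
      rcases key T hT x hx v hp with hvX | hvo
      · exact ⟨v, hvimp hvX, Relation.ReflTransGen.refl⟩
      · obtain ⟨y, hy, hp'⟩ := hvo
        obtain ⟨z, hz, hp''⟩ := hy
        -- y ∈ Xo: paths use Edet arcs; need v ∈ reach T Xo where Xo is the source set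
        exact ⟨y, ⟨z, hz, hp''⟩, hp'⟩
    · rintro ⟨x, hx, hp⟩
      exact ⟨x, hXoX hx, hp⟩
end
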